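/- Let G be a locally compact group acting properly on a locally compact Hausdorff space Z, let φ : Z → [0,∞) be continuous with q-compact support (q the orbit map), and let β be a Radon measure on Z. Then for every f ∈ C_c(Z), the function Ψ(f) : G → ℝ defined by Ψ(f)(g) = ∫_Z f(g·z) φ(z) dβ(z) is continuous with compact support. -/

import Mathlib

open MeasureTheory Topology

/-- For a proper action, a cut-off function `φ` with `q`-compact support and a Radon
measure `β`, the averaged function `Ψ(f)(g) = ∫ f(g·z) φ(z) dβ(z)` is continuous with
compact support for every `f ∈ C_c(Z)`. -/
theorem stmt9 {G Z : Type*} [Group G] [TopologicalSpace G] [IsTopologicalGroup G]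
    [LocallyCompactSpace G] [T2Space G]
    [TopologicalSpace Z] [LocallyCompactSpace Z] [T2Space Z]
    [MeasurableSpace Z] [BorelSpace Z]
    [MulAction G Z] [ContinuousSMul G Z]
    (hproper : IsProperMap (fun p : G × Z => (p.1 • p.2, p.2)))
    (β : Measure Z) [β.Regular]
    (φ : Z → ℝ) (hφc : Continuous φ) (hφ0 : ∀ z, 0 ≤ φ z)
    (hφq : ∀ C : Set (Quotient (MulAction.orbitRel G Z)), IsCompact C →
      IsCompact (tsupport φ ∩ (Quotient.mk (MulAction.orbitRel G Z)) ⁻¹' C))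
    (f : Z → ℝ) (hfc : Continuous f) (hfs : HasCompactSupport f) :
    Continuous (fun g : G => ∫ z, f (g • z) * φ z ∂β) ∧
    HasCompactSupport (fun g : G => ∫ z, f (g • z) * φ z ∂β) := by
  set q : Z → Quotient (MulAction.orbitRel G Z) := Quotient.mk (MulAction.orbitRel G Z) with hq
  set K : Set Z := tsupport f with hK
  have hKc : IsCompact K := hfs
  have hqc : Continuous q := continuous_quot_mk
  have hQ : IsCompact (q '' K) := hKc.image hqc
  set S : Set Z := tsupport φ ∩ q ⁻¹' (q '' K) with hS
  have hSc : IsCompact S := hφq _ hQ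
  set P : Set (G × Z) := (fun p : G × Z => (p.1 • p.2, p.2)) ⁻¹' (K ×ˢ S) with hP
  have hPc : IsCompact P := hproper.isCompact_preimage (hKc.prod hSc)
  set L : Set G := Prod.fst '' P with hL
  set T : Set Z := Prod.snd '' P with hT
  have hLc : IsCompact L := hPc.image continuous_fst
  have hTc : IsCompact T := hPc.image continuous_snd
  -- key: if the integrand is nonzero then (g, z) ∈ P
  have hkey : ∀ g : G, ∀ z : Z, f (g • z) * φ z ≠ 0 → (g, z) ∈ P := by
    intro g z hne
    have hf0 : f (g • z) ≠ 0 := fun h => hne (by simp [h])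
    have hφ0' : φ z ≠ 0 := fun h => hne (by simp [h])
    have hgz : g • z ∈ K := subset_tsupport f hf0
    have hzφ : z ∈ tsupport φ := subset_tsupport φ hφ0'
    have hqz : q (g • z) = q z := Quotient.sound ⟨g, rfl⟩
    exact ⟨hgz, hzφ, ⟨g • z, hgz, hqz⟩⟩
  have hvanish : ∀ g : G, ∀ z : Z, z ∉ T → f (g • z) * φ z = 0 := by
    intro g z hz
    by_contra hne
    exact hz ⟨(g, z), hkey g z hne, rfl⟩
  -- for each g, the integrand is continuous with compact support, hence integrable
  have hcont : ∀ g : G, Continuous (fun z => f (g • z) * φ z) := fun g =>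
    (hfc.comp (continuous_const_smul g)).mul hφc
  have hsupp : ∀ g : G, HasCompactSupport (fun z => f (g • z) * φ z) := fun g =>
    HasCompactSupport.intro hTc (fun z hz => hvanish g z hz)
  have hint : ∀ g : G, Integrable (fun z => f (g • z) * φ z) β := fun g =>
    (hcont g).integrable_of_hasCompactSupport (hsupp g)
  constructor
  · -- continuity
    rw [continuous_iff_continuousAt]
    intro g₀
    rw [ContinuousAt, Metric.tendsto_nhds]
    intro ε hε
    set C : ℝ := ∫ z in T, φ z ∂β with hC
    have hC0 : 0 ≤ C := integral_nonneg fun z => hφ0 z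
    set ε' : ℝ := ε / (C + 1) with hε'
    have hε'0 : 0 < ε' := div_pos hε (by linarith)
    -- tube lemma
    have hFcont : Continuous (fun p : G × Z => |f (p.1 • p.2) - f (g₀ • p.2)|) := by
      have : Continuous (fun p : G × Z => p.1 • p.2) := continuous_smul
      exact ((hfc.comp this).sub ((hfc.comp (continuous_const_smul g₀)).comp continuous_snd)).abs
    have hW : IsOpen ((fun p : G × Z => |f (p.1 • p.2) - f (g₀ • p.2)|) ⁻¹' Set.Iio ε') :=
      hFcont.isOpen_preimage _ isOpen_Iio
    have hsub : ({g₀} ×ˢ T : Set (G × Z)) ⊆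
        (fun p : G × Z => |f (p.1 • p.2) - f (g₀ • p.2)|) ⁻¹' Set.Iio ε' := by
      rintro ⟨g, z⟩ ⟨hg, -⟩
      simp only [Set.mem_singleton_iff] at hg
      subst hg
      simpa using hε'0
    obtain ⟨u, v, huo, -, hgu, hTv, huv⟩ :=
      generalized_tube_lemma isCompact_singleton hTc hW hsub
    filter_upwards [huo.mem_nhds (hgu rfl)] with g hg
    have hbound : ∀ z : Z, ‖f (g • z) * φ z - f (g₀ • z) * φ z‖ ≤
        T.indicator (fun z => ε' * φ z) z := by
      intro z
      by_cases hz : z ∈ T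
      · rw [Set.indicator_of_mem hz]
        have h1 : |f (g • z) - f (g₀ • z)| < ε' := by
          have := huv (Set.mk_mem_prod hg (hTv hz))
          simpa using this
        calc ‖f (g • z) * φ z - f (g₀ • z) * φ z‖
            = |f (g • z) - f (g₀ • z)| * φ z := by
              rw [← sub_mul, Real.norm_eq_abs, abs_mul, abs_of_nonneg (hφ0 z)]
          _ ≤ ε' * φ z := mul_le_mul_of_nonneg_right h1.le (hφ0 z)
      · rw [Set.indicator_of_notMem hz, hvanish g z hz, hvanish g₀ z hz]
        simp
    have hindint : Integrable (T.indicator (fun z => ε' * φ z)) β := by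
      rw [integrable_indicator_iff hTc.measurableSet]
      exact ((hφc.continuousOn).integrableOn_compact hTc).const_mul ε'
    have hnorm : ‖∫ z, (f (g • z) * φ z - f (g₀ • z) * φ z) ∂β‖ ≤
        ∫ z, T.indicator (fun z => ε' * φ z) z ∂β :=
      norm_integral_le_of_norm_le hindint (Filter.Eventually.of_forall hbound)
    have heq : ∫ z, T.indicator (fun z => ε' * φ z) z ∂β = ε' * C := by
      rw [integral_indicator hTc.measurableSet, integral_const_mul]
    have hlt : ε' * C < ε := by
      rw [hε', div_mul_eq_mul_div, div_lt_iff₀ (by linarith : (0:ℝ) < C + 1)]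
      nlinarith
    rw [Real.dist_eq, ← integral_sub (hint g) (hint g₀)]
    calc |∫ z, (f (g • z) * φ z - f (g₀ • z) * φ z) ∂β|
        ≤ ∫ z, T.indicator (fun z => ε' * φ z) z ∂β := hnorm
      _ = ε' * C := heq
      _ < ε := hlt
  · -- compact support
    apply HasCompactSupport.intro hLc
    intro g hg
    have : ∀ z : Z, f (g • z) * φ z = 0 := by
      intro z
      by_contra hne
      exact hg ⟨(g, z), hkey g z hne, rfl⟩
    simp only [this, integral_zero]
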